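/- Let β ≥ 0 and γ ≥ 0 with β + γ ≤ 1. Then there exists a constant c > 0, depending only on β and γ, such that for every λ ≥ 0 and all reals 0 ≤ q ≤ r < s ≤ t: |e^{−λ(t−r)} − e^{−λ(s−r)} − e^{−λ(t−q)} + e^{−λ(s−q)}| ≤ c (t−s)^β (r−q)^γ (s−r)^{−(β+γ)}. -/
import Mathlib

lemma aux_one_sub_exp_le {β : ℝ} (hβ : 0 ≤ β) (hβ1 : β ≤ 1) {x : ℝ} (hx : 0 ≤ x) :
    1 - Real.exp (-x) ≤ x ^ β := by
  rcases eq_or_lt_of_le hx with h0 | h0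
  · simp [← h0]
    positivity
  rcases le_or_gt 1 x with h | h
  · calc 1 - Real.exp (-x) ≤ 1 := by
          have := Real.exp_pos (-x); linarith
    _ ≤ x ^ β := Real.one_le_rpow h hβ
  · calc 1 - Real.exp (-x) ≤ x := by
          have := Real.add_one_le_exp (-x); linarith
    _ = x ^ (1:ℝ) := (Real.rpow_one x).symm
    _ ≤ x ^ β := Real.rpow_le_rpow_of_exponent_ge h0 h.le hβ1

lemma aux_exp_le_rpow {a : ℝ} (ha : 0 ≤ a) (ha1 : a ≤ 1) {y : ℝ} (hy : 0 < y) :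
    Real.exp (-y) ≤ y ^ (-a) := by
  have hya : y ^ a ≤ Real.exp y := by
    rcases le_or_gt 1 y with h | h
    · calc y ^ a ≤ y ^ (1:ℝ) := Real.rpow_le_rpow_of_exponent_le h ha1
      _ = y := Real.rpow_one y
      _ ≤ Real.exp y := by have := Real.add_one_le_exp y; linarith
    · calc y ^ a ≤ 1 := Real.rpow_le_one hy.le h.le ha
      _ ≤ Real.exp y := by have := Real.add_one_le_exp y; linarith
  rw [Real.exp_neg, Real.rpow_neg hy.le]
  exact inv_anti₀ (Real.rpow_pos_of_pos hy a) hya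

/-- Scalar version, uniform in `λ ≥ 0`, of the semigroup estimate
`|S(t−r) − S(s−r) − S(t−q) + S(s−q)| ≤ c (t−s)^β (r−q)^γ (s−r)^{−(β+γ)}`:
for `β, γ ≥ 0` with `β + γ ≤ 1` there is `c = c(β,γ) > 0` such that for all
`λ ≥ 0` and `0 ≤ q ≤ r < s ≤ t`,
`|e^{−λ(t−r)} − e^{−λ(s−r)} − e^{−λ(t−q)} + e^{−λ(s−q)}|
  ≤ c (t−s)^β (r−q)^γ (s−r)^{−(β+γ)}`. -/
theorem exp_second_difference_bound {β γ : ℝ}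
    (hβ : 0 ≤ β) (hγ : 0 ≤ γ) (hβγ : β + γ ≤ 1) :
    ∃ c > 0, ∀ lam : ℝ, 0 ≤ lam → ∀ q r s t : ℝ,
      0 ≤ q → q ≤ r → r < s → s ≤ t →
      |Real.exp (-lam * (t - r)) - Real.exp (-lam * (s - r)) -
          Real.exp (-lam * (t - q)) + Real.exp (-lam * (s - q))| ≤
        c * (t - s) ^ β * (r - q) ^ γ * (s - r) ^ (-(β + γ)) := by
  refine ⟨1, one_pos, ?_⟩
  intro lam hlam q r s t hq hqr hrs hst
  have hts : 0 ≤ t - s := by linarith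
  have hrq : 0 ≤ r - q := by linarith
  have hsr : 0 < s - r := by linarith
  have hrhs : 0 ≤ (t - s) ^ β * (r - q) ^ γ * (s - r) ^ (-(β + γ)) := by positivity
  rcases eq_or_lt_of_le hlam with h0 | hlam0
  · rw [← h0]
    norm_num
    positivity
  -- key factorization
  have key : Real.exp (-lam * (t - r)) - Real.exp (-lam * (s - r)) -
      Real.exp (-lam * (t - q)) + Real.exp (-lam * (s - q)) =
      -((1 - Real.exp (-(lam * (t - s)))) * Real.exp (-(lam * (s - r))) *
        (1 - Real.exp (-(lam * (r - q))))) := by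
    have e1 : -lam * (t - r) = -(lam * (t - s)) + -(lam * (s - r)) := by ring
    have e2 : -lam * (t - q) = -(lam * (t - s)) + -(lam * (s - r)) + -(lam * (r - q)) := by ring
    have e3 : -lam * (s - q) = -(lam * (s - r)) + -(lam * (r - q)) := by ring
    have e4 : -lam * (s - r) = -(lam * (s - r)) := by ring
    rw [e1, e2, e3, e4, Real.exp_add, Real.exp_add, Real.exp_add, Real.exp_add]
    ring
  have h1 : (0:ℝ) ≤ 1 - Real.exp (-(lam * (t - s))) := by
    have : Real.exp (-(lam * (t - s))) ≤ 1 := Real.exp_le_one_iff.mpr (by nlinarith)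
    linarith
  have h3 : (0:ℝ) ≤ 1 - Real.exp (-(lam * (r - q))) := by
    have : Real.exp (-(lam * (r - q))) ≤ 1 := Real.exp_le_one_iff.mpr (by nlinarith)
    linarith
  rw [key, abs_neg, abs_of_nonneg (by positivity)]
  have b1 : 1 - Real.exp (-(lam * (t - s))) ≤ (lam * (t - s)) ^ β :=
    aux_one_sub_exp_le hβ (by linarith) (by positivity)
  have b3 : 1 - Real.exp (-(lam * (r - q))) ≤ (lam * (r - q)) ^ γ :=
    aux_one_sub_exp_le hγ (by linarith) (by positivity)
  have b2 : Real.exp (-(lam * (s - r))) ≤ (lam * (s - r)) ^ (-(β + γ)) :=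
    aux_exp_le_rpow (by linarith) hβγ (by positivity)
  have hprod : (1 - Real.exp (-(lam * (t - s)))) * Real.exp (-(lam * (s - r))) *
      (1 - Real.exp (-(lam * (r - q)))) ≤
      (lam * (t - s)) ^ β * (lam * (s - r)) ^ (-(β + γ)) * (lam * (r - q)) ^ γ := by
    have hexp1 : (0:ℝ) ≤ Real.exp (-(lam * (s - r))) := (Real.exp_pos _).le
    apply mul_le_mul
    · exact mul_le_mul b1 b2 hexp1 (by positivity)
    · exact b3
    · exact h3
    · positivity
  refine hprod.trans (le_of_eq ?_)
  rw [Real.mul_rpow hlam hts, Real.mul_rpow hlam hsr.le, Real.mul_rpow hlam hrq]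
  rw [show lam ^ β * (t - s) ^ β * (lam ^ (-(β + γ)) * (s - r) ^ (-(β + γ))) *
      (lam ^ γ * (r - q) ^ γ) =
      (lam ^ β * lam ^ (-(β + γ)) * lam ^ γ) *
      ((t - s) ^ β * (r - q) ^ γ * (s - r) ^ (-(β + γ))) by ring]
  rw [← Real.rpow_add hlam0, ← Real.rpow_add hlam0]
  rw [show β + -(β + γ) + γ = 0 by ring, Real.rpow_zero]
  ring
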